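/- Let S be a string with labels ℓ. For any pattern P = c₁c₂⋯c_m and interval [a,b], the count |{i : P occurs at i in S, ℓ(i) ∈ [a,b]}| can be computed by m iterated rank computations: defining I₀ = the interval of positions of S_ε (= S sorted by label) with labels in [a,b], and I_k = the interval of occurrences of c_k inside I_{k−1} within S_{c₁⋯c_{k−1}}, the length of I_m equals the desired count. -/

import Mathlib

def occursAt {α : Type*} (S P : List α) (i : ℕ) : Prop := P <+: S.drop i

instance {α : Type*} [DecidableEq α] (S P : List α) (i : ℕ) : Decidable (occursAt S P i) :=
  inferInstanceAs (Decidable (P <+: S.drop i))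

/-- The starting positions of occurrences of `w` in `S`, stably sorted by label. -/
def sortedOcc {α : Type*} [DecidableEq α] (S : List α) (ℓ : ℕ → ℕ) (w : List α) : List ℕ :=
  ((List.range S.length).filter (fun i => decide (occursAt S w i))).mergeSort
    (fun i j => decide (ℓ i < ℓ j ∨ (ℓ i = ℓ j ∧ i ≤ j)))

/-- `S_w`: the characters following occurrences of `w` in `S` (the sentinel `d` when the
occurrence reaches the end of `S`), listed sorted by the labels of those occurrences. -/
def Sw {α : Type*} [DecidableEq α] (S : List α) (ℓ : ℕ → ℕ) (d : α) (w : List α) : List α :=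
  (sortedOcc S ℓ w).map (fun i => S.getD (i + w.length) d)

/-- `rankc T c j` counts the occurrences of `c` among the first `j` characters of `T`. -/
def rankc {α : Type*} [DecidableEq α] (T : List α) (c : α) (j : ℕ) : ℕ :=
  ((T.take j).filter (fun x => decide (x = c))).length

/-- The iterated rank computation: starting from an interval of `S_ε` and descending
character by character, at each step mapping the interval by two rank queries. -/
def iter {α : Type*} [DecidableEq α] (S : List α) (ℓ : ℕ → ℕ) (d : α) :
    List α → List α → ℕ × ℕ → ℕ × ℕ
  | _, [], p => p
  | w, c :: rest, (lo, hi) =>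
      iter S ℓ d (w ++ [c]) rest (rankc (Sw S ℓ d w) c lo, rankc (Sw S ℓ d w) c hi)

/-! ### Auxiliary machinery -/

/-- Count of occurrences of `w` whose position satisfies the boolean predicate `p`. -/
def cntL {α : Type*} [DecidableEq α] (S : List α) (w : List α) (p : ℕ → Bool) : ℕ :=
  (List.range S.length).countP (fun i => decide (occursAt S w i) && p i)

lemma prefix_snoc_iff {α : Type*} {L w : List α} {c d : α} (hc : c ≠ d) :
    w ++ [c] <+: L ↔ w <+: L ∧ L.getD w.length d = c := by
  constructor
  · rintro ⟨t, ht⟩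
    rw [List.append_assoc] at ht
    refine ⟨⟨[c] ++ t, ht⟩, ?_⟩
    rw [List.getD_eq_getElem?_getD, ← ht, List.getElem?_append_right le_rfl]
    simp
  · rintro ⟨⟨t, ht⟩, hg⟩
    rw [List.getD_eq_getElem?_getD, ← ht, List.getElem?_append_right le_rfl] at hg
    simp only [Nat.sub_self] at hg
    match t, hg with
    | [], hg => simp at hg; exact absurd hg.symm hc
    | x :: t', hg =>
      simp at hg
      subst hg
      exact ⟨t', by simpa using ht⟩

lemma occursAt_snoc_iff {α : Type*} (S : List α) {w : List α} {c d : α} (hc : c ≠ d) (i : ℕ) :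
    occursAt S (w ++ [c]) i ↔ occursAt S w i ∧ S.getD (i + w.length) d = c := by
  unfold occursAt
  rw [prefix_snoc_iff hc]
  have : (S.drop i).getD w.length d = S.getD (i + w.length) d := by
    rw [List.getD_eq_getElem?_getD, List.getD_eq_getElem?_getD, List.getElem?_drop]
  rw [this]

/-- In a list pairwise-sorted by `r`, a predicate closed downward along `r` carves a prefix. -/
lemma filter_eq_takeWhile_of_sorted {L : List ℕ} {r : ℕ → ℕ → Bool} {p : ℕ → Bool}
    (hL : List.Pairwise (fun a b => r a b = true) L)
    (hp : ∀ i j, r i j = true → p j = true → p i = true) :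
    L.filter p = L.takeWhile p := by
  induction L with
  | nil => rfl
  | cons x t ih =>
    rcases List.pairwise_cons.mp hL with ⟨hx, ht⟩
    by_cases hpx : p x = true
    · rw [List.filter_cons_of_pos hpx, List.takeWhile_cons_of_pos hpx, ih ht]
    · rw [List.filter_cons_of_neg hpx, List.takeWhile_cons_of_neg hpx]
      rw [List.filter_eq_nil_iff]
      intro y hy hpy
      exact hpx (hp x y (hx y hy) hpy)

lemma take_countP_of_sorted {L : List ℕ} {r : ℕ → ℕ → Bool} {p : ℕ → Bool}
    (hL : List.Pairwise (fun a b => r a b = true) L)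
    (hp : ∀ i j, r i j = true → p j = true → p i = true) :
    L.take (L.countP p) = L.filter p := by
  rw [List.countP_eq_length_filter, filter_eq_takeWhile_of_sorted hL hp]
  exact (List.prefix_iff_eq_take.mp (List.takeWhile_prefix p)).symm

section Step

variable {α : Type*} [DecidableEq α] (S : List α) (ℓ : ℕ → ℕ) (d : α)

abbrev labRel (ℓ : ℕ → ℕ) : ℕ → ℕ → Bool :=
  fun i j => decide (ℓ i < ℓ j ∨ (ℓ i = ℓ j ∧ i ≤ j))

lemma labRel_trans : ∀ a b c, labRel ℓ a b = true → labRel ℓ b c = true → labRel ℓ a c = true := by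
  intro a b c h₁ h₂
  simp only [labRel, decide_eq_true_eq] at *
  omega

lemma labRel_total : ∀ a b, (labRel ℓ a b || labRel ℓ b a) = true := by
  intro a b
  simp only [labRel, Bool.or_eq_true, decide_eq_true_eq]
  omega

lemma sortedOcc_perm (w : List α) :
    (sortedOcc S ℓ w).Perm ((List.range S.length).filter (fun i => decide (occursAt S w i))) :=
  List.mergeSort_perm _ _

lemma sortedOcc_sorted (w : List α) :
    List.Pairwise (fun a b => labRel ℓ a b = true) (sortedOcc S ℓ w) :=
  List.pairwise_mergeSort (labRel_trans ℓ) (labRel_total ℓ) _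

lemma countP_sortedOcc (w : List α) (p : ℕ → Bool) :
    (sortedOcc S ℓ w).countP p = cntL S w p := by
  rw [(sortedOcc_perm S ℓ w).countP_eq, List.countP_filter, cntL]
  exact List.countP_congr (fun x _ => by simp [Bool.and_comm])

/-- The key step: one rank query maps the count for `w` to the count for `w ++ [c]`. -/
lemma rank_step (w : List α) (c : α) (hc : c ≠ d) (p : ℕ → Bool)
    (hp : ∀ i j, labRel ℓ i j = true → p j = true → p i = true) :
    rankc (Sw S ℓ d w) c (cntL S w p) = cntL S (w ++ [c]) p := by
  rw [rankc, Sw, ← countP_sortedOcc S ℓ w p, ← List.map_take,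
    take_countP_of_sorted (sortedOcc_sorted S ℓ w) hp,
    ← List.countP_eq_length_filter, List.countP_map, List.countP_filter,
    (sortedOcc_perm S ℓ w).countP_eq, List.countP_filter, cntL]
  refine List.countP_congr (fun x _ => ?_)
  simp only [Function.comp, Bool.and_eq_true, decide_eq_true_eq,
    occursAt_snoc_iff S hc x]
  tauto

lemma iter_invariant (rest : List α) : ∀ (w : List α), d ∉ rest →
    ∀ (p₁ p₂ : ℕ → Bool),
    (∀ i j, labRel ℓ i j = true → p₁ j = true → p₁ i = true) →
    (∀ i j, labRel ℓ i j = true → p₂ j = true → p₂ i = true) →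
    iter S ℓ d w rest (cntL S w p₁, cntL S w p₂)
      = (cntL S (w ++ rest) p₁, cntL S (w ++ rest) p₂) := by
  induction rest with
  | nil => intro w _ p₁ p₂ _ _; simp [iter]
  | cons c rest ih =>
    intro w hd p₁ p₂ h₁ h₂
    have hc : c ≠ d := fun h => hd (h ▸ (List.mem_cons_self : c ∈ c :: rest))
    have hd' : d ∉ rest := fun h => hd (List.mem_cons_of_mem c h)
    show iter S ℓ d (w ++ [c]) rest
        (rankc (Sw S ℓ d w) c (cntL S w p₁), rankc (Sw S ℓ d w) c (cntL S w p₂)) = _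
    rw [rank_step S ℓ d w c hc p₁ h₁, rank_step S ℓ d w c hc p₂ h₂,
      ih (w ++ [c]) hd' p₁ p₂ h₁ h₂, List.append_assoc]
    rfl

end Step

/-- the count of occurrences of `P` with first label in `[a,b]` is computed by
`m` iterated rank computations: the length of the final interval `I_m` equals the count. -/
theorem stmt7 {α : Type*} [DecidableEq α] (S : List α) (ℓ : ℕ → ℕ) (d : α)
    (P : List α) (a b : ℕ) (hd : d ∉ P) :
    (iter S ℓ d [] P
        (((Finset.range S.length).filter (fun i => ℓ i < a)).card,
         ((Finset.range S.length).filter (fun i => ℓ i ≤ b)).card)).2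
      - (iter S ℓ d [] P
        (((Finset.range S.length).filter (fun i => ℓ i < a)).card,
         ((Finset.range S.length).filter (fun i => ℓ i ≤ b)).card)).1
      = ((Finset.range S.length).filter
          (fun i => occursAt S P i ∧ a ≤ ℓ i ∧ ℓ i ≤ b)).card := by
  set p₁ : ℕ → Bool := fun i => decide (ℓ i < a) with hp₁
  set p₂ : ℕ → Bool := fun i => decide (ℓ i ≤ b) with hp₂
  have h₁ : ∀ i j, labRel ℓ i j = true → p₁ j = true → p₁ i = true := by
    intro i j hij hj
    simp only [hp₁, labRel, decide_eq_true_eq] at *; omega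
  have h₂ : ∀ i j, labRel ℓ i j = true → p₂ j = true → p₂ i = true := by
    intro i j hij hj
    simp only [hp₂, labRel, decide_eq_true_eq] at *; omega
  have hcard₁ : ((Finset.range S.length).filter (fun i => ℓ i < a)).card = cntL S [] p₁ := by
    show ((List.range S.length).filter (fun i => decide (ℓ i < a))).length = _
    rw [← List.countP_eq_length_filter, cntL]
    exact List.countP_congr (fun x _ => by simp [occursAt, hp₁])
  have hcard₂ : ((Finset.range S.length).filter (fun i => ℓ i ≤ b)).card = cntL S [] p₂ := by
    show ((List.range S.length).filter (fun i => decide (ℓ i ≤ b))).length = _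
    rw [← List.countP_eq_length_filter, cntL]
    exact List.countP_congr (fun x _ => by simp [occursAt, hp₂])
  rw [hcard₁, hcard₂, iter_invariant S ℓ d P [] hd p₁ p₂ h₁ h₂]
  simp only [List.nil_append]
  have hrhs : ((Finset.range S.length).filter
      (fun i => occursAt S P i ∧ a ≤ ℓ i ∧ ℓ i ≤ b)).card
      = (List.range S.length).countP
          (fun i => decide (occursAt S P i ∧ a ≤ ℓ i ∧ ℓ i ≤ b)) := by
    show ((List.range S.length).filter _).length = _
    rw [← List.countP_eq_length_filter]
  rw [hrhs]
  show cntL S P p₂ - cntL S P p₁ = _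
  by_cases hab : a ≤ b
  · -- split cntL S P p₂ into p₁ part and the middle part
    have key : cntL S P p₂ = cntL S P p₁
        + (List.range S.length).countP (fun i => decide (occursAt S P i ∧ a ≤ ℓ i ∧ ℓ i ≤ b)) := by
      unfold cntL
      rw [List.countP_eq_length_filter (p := fun i => decide (occursAt S P i) && p₂ i),
        List.length_eq_countP_add_countP (fun i => p₁ i),
        List.countP_filter, List.countP_filter]
      congr 1
      · exact List.countP_congr (fun x _ => by
          simp only [hp₁, hp₂, Bool.and_eq_true, decide_eq_true_eq]
          constructor
          · rintro ⟨h1, h2, h3⟩; exact ⟨h2, h1⟩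
          · rintro ⟨h2, h1⟩; exact ⟨h1, h2, by omega⟩)
      · exact List.countP_congr (fun x _ => by
          simp only [hp₁, hp₂, Bool.and_eq_true, decide_eq_true_eq, Bool.not_eq_true']
          constructor
          · rintro ⟨h, hocc, hb⟩; simp at h; exact ⟨hocc, by omega⟩
          · rintro ⟨hocc, ha, hb⟩; exact ⟨by simp; omega, hocc, hb⟩)
    omega
  · have hz : (List.range S.length).countP
        (fun i => decide (occursAt S P i ∧ a ≤ ℓ i ∧ ℓ i ≤ b)) = 0 := by
      rw [List.countP_eq_zero]
      intro x _
      simp only [decide_eq_true_eq]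
      rintro ⟨_, ha, hb⟩; omega
    have hle : cntL S P p₂ ≤ cntL S P p₁ := by
      unfold cntL
      refine List.countP_mono_left (fun x _ h => ?_)
      simp only [hp₁, hp₂, Bool.and_eq_true, decide_eq_true_eq] at h ⊢
      exact ⟨h.1, by omega⟩
    omega
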